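/- arXiv:2108.11431 — 2 statements merged into one kernel-verified Lean document; each statement's English description precedes it below -/
import Mathlib

section
/- Let F, G : C ⥤ Cat be functors and η : F ⟶ G a natural transformation such that for every object c of C the component η_c : F(c) ⥤ G(c) is an equivalence of categories. Then the induced functor ∫η : ∫F → ∫G between Grothendieck constructions (given on objects by (c,x) ↦ (c, η_c(x))) is an equivalence of categories over C. -/
open CategoryTheory

/-- If `η : F ⟶ G` is a natural transformation of functors `C ⥤ Cat` whose components are
equivalences of categories, then the induced functor `∫F ⥤ ∫G` on Grothendieck
constructions is an equivalence of categories over `C`. -/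
theorem grothendieck_map_equivalence {C : Type*} [Category C] {F G : C ⥤ Cat}
    (η : F ⟶ G) (h : ∀ c : C, (η.app c).toFunctor.IsEquivalence) :
    (Grothendieck.map η).IsEquivalence ∧
      Grothendieck.map η ⋙ Grothendieck.forget G = Grothendieck.forget F := by
  haveI := h
  refine ⟨?_, rfl⟩
  haveI : (Grothendieck.map η).Faithful := by
    constructor
    rintro ⟨c, x⟩ ⟨c', x'⟩ ⟨f, φ⟩ ⟨g, ψ⟩ hfg
    have hb : f = g := congrArg Grothendieck.Hom.base hfg
    subst hb
    have hf := Grothendieck.congr hfg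
    simp only [Grothendieck.map_map_fiber, eqToHom_refl, Category.id_comp,
      Cat.eqToHom_app, cancel_epi] at hf
    exact Grothendieck.ext _ _ rfl (by simpa using (η.app c').toFunctor.map_injective (by erw [eqToHom_trans_assoc] at hf; exact (cancel_epi _).1 hf))
  haveI : (Grothendieck.map η).Full := by
    constructor
    rintro ⟨c, x⟩ ⟨c', x'⟩ ⟨g, χ⟩
    refine ⟨⟨g, (η.app c').toFunctor.preimage
      ((eqToHom (η.naturality g)).toNatTrans.app x ≫ χ)⟩, ?_⟩
    fapply Grothendieck.ext
    · rfl
    · simp [Grothendieck.map_map_fiber]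
      erw [eqToHom_trans_assoc, Cat.Hom₂.eqToHom_toNatTrans, eqToHom_app, eqToHom_trans_assoc, eqToHom_refl, Category.id_comp]
  haveI : (Grothendieck.map η).EssSurj := by
    constructor
    rintro ⟨c, y⟩
    exact ⟨⟨c, (η.app c).toFunctor.objPreimage y⟩,
      ⟨(Grothendieck.ι G c).mapIso ((η.app c).toFunctor.objObjPreimageIso y)⟩⟩
  exact { }
end

section
/- Let p : D ⥤ C be a cocartesian fibration of categories and let B be any category. Then the induced functor p_* : Fun(B, D) → Fun(B, C) (postcomposition with p) is a cocartesian fibration, and a natural transformation μ : F ⟶ G between functors B → D is p_*-cocartesian if and only if each component μ_b : F(b) → G(b) is p-cocartesian. -/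
open CategoryTheory

/-- A morphism `α : d₀ ⟶ d₁` is `p`-cocartesian: for every `g : d₀ ⟶ d₂` and every
`h : p d₁ ⟶ p d₂` with `p α ≫ h = p g`, there is a unique `k : d₁ ⟶ d₂` with
`p k = h` and `α ≫ k = g` (equivalently, the square of hom-sets
`Hom(d₁,d₂) → Hom(d₀,d₂)` over `Hom(p d₁, p d₂) → Hom(p d₀, p d₂)` is a pullback). -/
def IsCocart {D : Type*} {C : Type*} [Category D] [Category C] (p : D ⥤ C)
    {d₀ d₁ : D} (α : d₀ ⟶ d₁) : Prop :=
  ∀ ⦃d₂ : D⦄ (g : d₀ ⟶ d₂) (h : p.obj d₁ ⟶ p.obj d₂),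
    p.map α ≫ h = p.map g → ∃! k : d₁ ⟶ d₂, p.map k = h ∧ α ≫ k = g

/-- `p : D ⥤ C` is a cocartesian fibration: every morphism `f : p d₀ ⟶ c` of the base
admits a `p`-cocartesian lift with source `d₀`. -/
def IsCocartFib {D : Type*} {C : Type*} [Category D] [Category C] (p : D ⥤ C) : Prop :=
  ∀ (d₀ : D) ⦃c : C⦄ (f : p.obj d₀ ⟶ c),
    ∃ (d₁ : D) (α : d₀ ⟶ d₁), IsCocart p α ∧ p.IsHomLift f α

section Aux
variable {D C : Type*} [Category D] [Category C] (p : D ⥤ C)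

noncomputable def cocartLift {d₀ d₁ d₂ : D} {α : d₀ ⟶ d₁} (hα : IsCocart p α)
    (g : d₀ ⟶ d₂) (h : p.obj d₁ ⟶ p.obj d₂) (w : p.map α ≫ h = p.map g) : d₁ ⟶ d₂ :=
  (hα g h w).choose

lemma cocartLift_map {d₀ d₁ d₂ : D} {α : d₀ ⟶ d₁} (hα : IsCocart p α)
    (g : d₀ ⟶ d₂) (h : p.obj d₁ ⟶ p.obj d₂) (w : p.map α ≫ h = p.map g) :
    p.map (cocartLift p hα g h w) = h := (hα g h w).choose_spec.1.1

lemma cocartLift_fac {d₀ d₁ d₂ : D} {α : d₀ ⟶ d₁} (hα : IsCocart p α)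
    (g : d₀ ⟶ d₂) (h : p.obj d₁ ⟶ p.obj d₂) (w : p.map α ≫ h = p.map g) :
    α ≫ cocartLift p hα g h w = g := (hα g h w).choose_spec.1.2

lemma cocartLift_uniq {d₀ d₁ d₂ : D} {α : d₀ ⟶ d₁} (hα : IsCocart p α)
    (g : d₀ ⟶ d₂) (h : p.obj d₁ ⟶ p.obj d₂) (w : p.map α ≫ h = p.map g)
    (y : d₁ ⟶ d₂) (h1 : p.map y = h) (h2 : α ≫ y = g) :
    y = cocartLift p hα g h w := (hα g h w).choose_spec.2 y ⟨h1, h2⟩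

lemma IsCocart.comp_iso {d₀ d₁ d₂ : D} {α : d₀ ⟶ d₁} (hα : IsCocart p α)
    (k : d₁ ⟶ d₂) [IsIso k] : IsCocart p (α ≫ k) := by
  intro d₃ g h w
  have w' : p.map α ≫ p.map k ≫ h = p.map g := by simpa using w
  refine ⟨inv k ≫ cocartLift p hα g (p.map k ≫ h) w', ⟨?_, ?_⟩, ?_⟩
  · rw [p.map_comp, cocartLift_map, ← Category.assoc, ← p.map_comp,
      IsIso.inv_hom_id, p.map_id, Category.id_comp]
  · rw [Category.assoc, IsIso.hom_inv_id_assoc, cocartLift_fac]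
  · rintro y ⟨hy1, hy2⟩
    have : k ≫ y = cocartLift p hα g (p.map k ≫ h) w' := by
      refine cocartLift_uniq p hα g _ w' _ ?_ ?_
      · rw [p.map_comp, hy1]
      · simpa using hy2
    rw [← this, IsIso.inv_hom_id_assoc]

end Aux

section Construction
variable {D C B : Type*} [Category D] [Category C] [Category B] {p : D ⥤ C}
  (hp : IsCocartFib p) (F : B ⥤ D) {K : B ⥤ C} (f : F ⋙ p ⟶ K)

noncomputable def Lobj (b : B) : D := (hp (F.obj b) (f.app b)).choose

noncomputable def Lhom (b : B) : F.obj b ⟶ Lobj hp F f b :=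
  (hp (F.obj b) (f.app b)).choose_spec.choose

lemma Lcocart (b : B) : IsCocart p (Lhom hp F f b) :=
  (hp (F.obj b) (f.app b)).choose_spec.choose_spec.1

lemma LhomLift (b : B) : p.IsHomLift (f.app b) (Lhom hp F f b) :=
  (hp (F.obj b) (f.app b)).choose_spec.choose_spec.2

lemma Lcod (b : B) : p.obj (Lobj hp F f b) = K.obj b :=
  haveI := LhomLift hp F f b
  IsHomLift.codomain_eq p (f.app b) (Lhom hp F f b)

lemma Lmap (b : B) :
    p.map (Lhom hp F f b) = f.app b ≫ eqToHom (Lcod hp F f b).symm := by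
  haveI := LhomLift hp F f b
  rw [IsHomLift.fac' p (f.app b) (Lhom hp F f b)]
  simp

lemma Lcond {b b' : B} (g : b ⟶ b') :
    p.map (Lhom hp F f b) ≫
      (eqToHom (Lcod hp F f b) ≫ K.map g ≫ eqToHom (Lcod hp F f b').symm) =
      p.map (F.map g ≫ Lhom hp F f b') := by
  rw [Lmap, p.map_comp, Lmap]
  have := f.naturality g
  simp only [Functor.comp_map] at this
  simp [← reassoc_of% this]

noncomputable def Lfunc : B ⥤ D where
  obj b := Lobj hp F f b
  map {b b'} g := cocartLift p (Lcocart hp F f b) (F.map g ≫ Lhom hp F f b')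
    (eqToHom (Lcod hp F f b) ≫ K.map g ≫ eqToHom (Lcod hp F f b').symm)
    (Lcond hp F f g)
  map_id b := by
    refine (cocartLift_uniq p (Lcocart hp F f b) _ _ (Lcond hp F f (𝟙 b)) (𝟙 _) ?_ ?_).symm
    · simp
    · simp
  map_comp {b b' b''} g g' := by
    refine (cocartLift_uniq p (Lcocart hp F f b) _ _ (Lcond hp F f (g ≫ g')) _ ?_ ?_).symm
    · rw [p.map_comp, cocartLift_map, cocartLift_map]
      simp
    · rw [← Category.assoc, cocartLift_fac, Category.assoc, cocartLift_fac]
      simp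

lemma Lfunc_map {b b' : B} (g : b ⟶ b') :
    (Lfunc hp F f).map g = cocartLift p (Lcocart hp F f b) (F.map g ≫ Lhom hp F f b')
      (eqToHom (Lcod hp F f b) ≫ K.map g ≫ eqToHom (Lcod hp F f b').symm)
      (Lcond hp F f g) := rfl

lemma Lfunc_comp_p : Lfunc hp F f ⋙ p = K := by
  refine CategoryTheory.Functor.ext (fun b => Lcod hp F f b) ?_
  intro b b' g
  show p.map ((Lfunc hp F f).map g) = _
  exact cocartLift_map p (Lcocart hp F f b) _ _ (Lcond hp F f g)

noncomputable def Lnat : F ⟶ Lfunc hp F f where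
  app b := Lhom hp F f b
  naturality b b' g :=
    (cocartLift_fac p (Lcocart hp F f b) _ _ (Lcond hp F f g)).symm

end Construction

section Main
variable {D C B : Type*} [Category D] [Category C] [Category B] (p : D ⥤ C)

lemma componentwise_cocart {F G : B ⥤ D} (μ : F ⟶ G) (hc : ∀ b : B, IsCocart p (μ.app b)) :
    IsCocart ((Functor.whiskeringRight B D C).obj p) μ := by
  intro H ν η w
  have wb : ∀ b : B, p.map (μ.app b) ≫ η.app b = p.map (ν.app b) := fun b => by
    have := congrArg (fun t => NatTrans.app t b) w
    simpa using this
  have cond : ∀ {b b' : B} (g : b ⟶ b'),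
      p.map (μ.app b) ≫ (η.app b ≫ p.map (H.map g)) = p.map (ν.app b ≫ H.map g) := by
    intro b b' g
    rw [← Category.assoc, wb b, ← p.map_comp]
  refine ⟨⟨fun b => cocartLift p (hc b) (ν.app b) (η.app b) (wb b), ?_⟩, ⟨?_, ?_⟩, ?_⟩
  · intro b b' g
    have e1 : cocartLift p (hc b) (ν.app b) (η.app b) (wb b) ≫ H.map g =
        cocartLift p (hc b) (ν.app b ≫ H.map g) (η.app b ≫ p.map (H.map g)) (cond g) := by
      refine cocartLift_uniq p (hc b) _ _ (cond g) _ ?_ ?_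
      · rw [p.map_comp, cocartLift_map]
      · rw [← Category.assoc, cocartLift_fac]
    have e2 : G.map g ≫ cocartLift p (hc b') (ν.app b') (η.app b') (wb b') =
        cocartLift p (hc b) (ν.app b ≫ H.map g) (η.app b ≫ p.map (H.map g)) (cond g) := by
      refine cocartLift_uniq p (hc b) _ _ (cond g) _ ?_ ?_
      · rw [p.map_comp, cocartLift_map]
        have := η.naturality g
        simp only [Functor.whiskeringRight_obj_obj, Functor.comp_map] at this
        rw [← this]
      · rw [← Category.assoc, ← μ.naturality g, Category.assoc, cocartLift_fac]
        exact ν.naturality g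
    rw [e1, e2]
  · ext b
    exact cocartLift_map p (hc b) _ _ (wb b)
  · ext b
    exact cocartLift_fac p (hc b) _ _ (wb b)
  · rintro y ⟨hy1, hy2⟩
    ext b
    refine cocartLift_uniq p (hc b) _ _ (wb b) _ ?_ ?_
    · exact congrArg (fun t => NatTrans.app t b) hy1
    · exact congrArg (fun t => NatTrans.app t b) hy2

end Main


section Converse
variable {D C B : Type*} [Category D] [Category C] [Category B] {p : D ⥤ C}

lemma cocart_components (hp : IsCocartFib p) {F G : B ⥤ D} (μ : F ⟶ G)
    (hμ : IsCocart ((Functor.whiskeringRight B D C).obj p) μ) (b : B) : IsCocart p (μ.app b) := by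
  set f : F ⋙ p ⟶ G ⋙ p := Functor.whiskerRight μ p with hf
  have hfapp : ∀ b : B, f.app b = p.map (μ.app b) := fun b => rfl
  have hGG' : Lfunc hp F f ⋙ p = G ⋙ p := Lfunc_comp_p hp F f
  have condκ : ∀ b : B, p.map (Lhom hp F f b) ≫ eqToHom (Lcod hp F f b) = p.map (μ.app b) := by
    intro b
    rw [Lmap]
    simp [hfapp]
  have condκ' : ∀ {b b' : B} (g : b ⟶ b'),
      p.map (Lhom hp F f b) ≫ (eqToHom (Lcod hp F f b) ≫ p.map (G.map g)) =
        p.map (μ.app b ≫ G.map g) := by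
    intro b b' g
    rw [← Category.assoc, condκ b, ← p.map_comp]
  let κ : Lfunc hp F f ⟶ G :=
    { app := fun b => cocartLift p (Lcocart hp F f b) (μ.app b) (eqToHom (Lcod hp F f b))
        (condκ b)
      naturality := by
        intro b b' g
        have e1 : cocartLift p (Lcocart hp F f b) (μ.app b) (eqToHom (Lcod hp F f b))
              (condκ b) ≫ G.map g =
            cocartLift p (Lcocart hp F f b) (μ.app b ≫ G.map g)
              (eqToHom (Lcod hp F f b) ≫ p.map (G.map g)) (condκ' g) := by
          refine cocartLift_uniq p (Lcocart hp F f b) _ _ (condκ' g) _ ?_ ?_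
          · rw [p.map_comp, cocartLift_map]
          · rw [← Category.assoc, cocartLift_fac]
        have e2 : (Lfunc hp F f).map g ≫ cocartLift p (Lcocart hp F f b') (μ.app b')
              (eqToHom (Lcod hp F f b')) (condκ b') =
            cocartLift p (Lcocart hp F f b) (μ.app b ≫ G.map g)
              (eqToHom (Lcod hp F f b) ≫ p.map (G.map g)) (condκ' g) := by
          refine cocartLift_uniq p (Lcocart hp F f b) _ _ (condκ' g) _ ?_ ?_
          · erw [p.map_comp, Lfunc_map, cocartLift_map, cocartLift_map]
            simp [hfapp]
            erw [Category.assoc, Category.assoc, eqToHom_trans, eqToHom_refl, Category.comp_id]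
          · erw [← Category.assoc]
            have : Lhom hp F f b ≫ (Lfunc hp F f).map g = F.map g ≫ Lhom hp F f b' :=
              cocartLift_fac p (Lcocart hp F f b) _ _ (Lcond hp F f g)
            erw [this, Category.assoc, cocartLift_fac, ← μ.naturality g]
        erw [e1, e2]  }
  have hκ : ∀ b : B, Lhom hp F f b ≫ κ.app b = μ.app b := fun b =>
    cocartLift_fac p (Lcocart hp F f b) _ _ (condκ b)
  have hκmap : ∀ b : B, p.map (κ.app b) = eqToHom (Lcod hp F f b) := fun b =>
    cocartLift_map p (Lcocart hp F f b) _ _ (condκ b)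
  have hLκ : Lnat hp F f ≫ κ = μ := by
    ext b
    exact hκ b
  have condμ' : ((Functor.whiskeringRight B D C).obj p).map μ ≫ eqToHom hGG'.symm =
      ((Functor.whiskeringRight B D C).obj p).map (Lnat hp F f) := by
    ext b
    show p.map (μ.app b) ≫ _ = p.map (Lhom hp F f b)
    rw [Lmap, eqToHom_app]
    simp [hfapp]
    rfl
  obtain ⟨l, ⟨hl1, hl2⟩, -⟩ := hμ (Lnat hp F f) (eqToHom hGG'.symm) condμ'
  have hlκ : l ≫ κ = 𝟙 G := by
    obtain ⟨m, -, hm⟩ := hμ μ (𝟙 _) (by simp)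
    rw [hm (l ≫ κ) ⟨?_, ?_⟩, hm (𝟙 G) ⟨by simp, by simp⟩]
    · rw [Functor.map_comp, hl1]
      show _ ≫ ((Functor.whiskeringRight B D C).obj p).map κ = _
      have : ((Functor.whiskeringRight B D C).obj p).map κ = eqToHom hGG' := by
        ext b
        show p.map (κ.app b) = _
        rw [hκmap b, eqToHom_app]
        rfl
      rw [this, eqToHom_trans, eqToHom_refl]
    · rw [← Category.assoc, hl2, hLκ]
  have hκl : κ ≫ l = 𝟙 (Lfunc hp F f) := by
    have hcμ' : IsCocart ((Functor.whiskeringRight B D C).obj p) (Lnat hp F f) :=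
      componentwise_cocart p _ (fun b => Lcocart hp F f b)
    obtain ⟨m, -, hm⟩ := hcμ' (Lnat hp F f) (𝟙 _) (by simp)
    rw [hm (κ ≫ l) ⟨?_, ?_⟩, hm (𝟙 _) ⟨by simp, by simp⟩]
    · rw [Functor.map_comp, hl1]
      have : ((Functor.whiskeringRight B D C).obj p).map κ = eqToHom hGG' := by
        ext b
        show p.map (κ.app b) = _
        rw [hκmap b, eqToHom_app]
        rfl
      rw [this, eqToHom_trans, eqToHom_refl]
    · rw [← Category.assoc, hLκ, hl2]
  have : IsIso (κ.app b) :=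
    ⟨l.app b, congrArg (fun t => NatTrans.app t b) hκl,
      congrArg (fun t => NatTrans.app t b) hlκ⟩
  rw [← hκ b]
  exact @IsCocart.comp_iso _ _ _ _ p _ _ _ _ (Lcocart hp F f b) (κ.app b) this

end Converse


/-- If `p : D ⥤ C` is a cocartesian fibration, then so is the induced functor
`Fun(B,D) ⥤ Fun(B,C)` of postcomposition with `p`; moreover a natural transformation is
cocartesian for it iff all its components are `p`-cocartesian. -/
theorem functorCat_isCocartFib {D C : Type*} [Category D] [Category C] (p : D ⥤ C)
    (hp : IsCocartFib p) (B : Type*) [Category B] :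
    IsCocartFib ((Functor.whiskeringRight B D C).obj p) ∧
      ∀ {F G : B ⥤ D} (μ : F ⟶ G),
        IsCocart ((Functor.whiskeringRight B D C).obj p) μ ↔
          ∀ b : B, IsCocart p (μ.app b) := by
  constructor
  · intro F K f
    refine ⟨Lfunc hp F f, Lnat hp F f, ?_, ?_⟩
    · exact componentwise_cocart p _ (fun b => Lcocart hp F f b)
    · refine IsHomLift.of_fac' _ _ _ rfl (Lfunc_comp_p hp F f) ?_
      ext b
      show p.map (Lhom hp F f b) = _
      rw [Lmap]
      simp [eqToHom_app]
      rfl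
  · intro F G μ
    constructor
    · intro hμ b
      exact cocart_components hp μ hμ b
    · intro hc
      exact componentwise_cocart p μ hc
end
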